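/- arXiv:1905.11254 — 7 statements merged into one kernel-verified Lean document; each statement's English description precedes it below -/
import Mathlib

section
/- If a graph G on n vertices has a g-good-neighbor cut, then the number of edges of G is at most C(n,2) − (g+1)². -/
open SimpleGraph

/-- `F` is a g-good-neighbor cut of `G`: removing `F` disconnects `G`
and every vertex outside `F` has at least `g` neighbors outside `F`. -/
def IsGNCut {V : Type*} [Fintype V] (G : SimpleGraph V) (g : ℕ) (F : Finset V) : Prop :=
  ¬ (G.induce ((↑F : Set V)ᶜ)).Preconnected ∧
    ∀ v : V, v ∉ F → g ≤ (G.neighborSet v \ (↑F : Set V)).ncard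

/-- The g-good-neighbor connectivity `κ^g(G)`: minimum size of a g-good-neighbor cut. -/
noncomputable def gnConn {V : Type*} [Fintype V] (G : SimpleGraph V) (g : ℕ) : ℕ :=
  sInf {m | ∃ F : Finset V, IsGNCut G g F ∧ F.card = m}

/-- Classical vertex connectivity (as minimum size of a vertex cut). -/
noncomputable def vConn {V : Type*} [Fintype V] (G : SimpleGraph V) : ℕ :=
  sInf {m | ∃ F : Finset V, ¬ (G.induce ((↑F : Set V)ᶜ)).Preconnected ∧ F.card = m}

/-- If G on n vertices has a g-good-neighbor cut, then e(G) ≤ C(n,2) − (g+1)². -/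
theorem stmt2 {V : Type*} [Fintype V] (G : SimpleGraph V) (g : ℕ) (F : Finset V)
    (h : IsGNCut G g F) :
    G.edgeSet.ncard ≤ (Fintype.card V).choose 2 - (g + 1) ^ 2 := by
  classical
  obtain ⟨hdis, hnb⟩ := h
  set S : Set V := (↑F : Set V)ᶜ with hS
  set H := G.induce S with hH
  rw [SimpleGraph.Preconnected] at hdis
  push_neg at hdis
  obtain ⟨a, b, hab⟩ := hdis
  set A : Set V := {x : V | ∃ hx : x ∈ S, H.Reachable a ⟨x, hx⟩} with hA
  set B : Set V := {x : V | ∃ hx : x ∈ S, ¬ H.Reachable a ⟨x, hx⟩} with hB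
  have hAS : A ⊆ S := fun x hx => hx.1
  have hBS : B ⊆ S := fun x hx => hx.1
  have hadj : ∀ (x y : V) (hx : x ∈ S) (hy : y ∈ S), G.Adj x y →
      H.Adj ⟨x, hx⟩ ⟨y, hy⟩ := by
    intro x y hx hy hxy
    simpa [hH, SimpleGraph.comap_adj] using hxy
  have hnbA : ∀ x ∈ A, G.neighborSet x \ (↑F : Set V) ⊆ A := by
    rintro x ⟨hxS, hxr⟩ y ⟨hyadj, hyF⟩
    exact ⟨hyF, hxr.trans (hadj x y hxS hyF hyadj).reachable⟩
  have hnbB : ∀ x ∈ B, G.neighborSet x \ (↑F : Set V) ⊆ B := by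
    rintro x ⟨hxS, hxr⟩ y ⟨hyadj, hyF⟩
    refine ⟨hyF, fun hr => hxr (hr.trans (hadj y x hyF hxS hyadj.symm).reachable)⟩
  have hsize : ∀ (C : Set V), C ⊆ S → (∀ x ∈ C, G.neighborSet x \ (↑F : Set V) ⊆ C) →
      ∀ x ∈ C, g + 1 ≤ C.ncard := by
    intro C hCS hC x hx
    have hsub : insert x (G.neighborSet x \ (↑F : Set V)) ⊆ C := by
      rw [Set.insert_subset_iff]
      exact ⟨hx, hC x hx⟩
    have hxmem : x ∉ G.neighborSet x \ (↑F : Set V) := by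
      simp [SimpleGraph.mem_neighborSet]
    have h1 : (insert x (G.neighborSet x \ (↑F : Set V))).ncard
        = (G.neighborSet x \ (↑F : Set V)).ncard + 1 :=
      Set.ncard_insert_of_notMem hxmem (Set.toFinite _)
    have h2 := Set.ncard_le_ncard hsub (Set.toFinite C)
    have hxF : x ∉ F := by
      have := hCS hx
      simpa [hS, Set.mem_compl_iff] using this
    have h3 := hnb x hxF
    omega
  have haA : (a : V) ∈ A := ⟨a.2, by rw [Subtype.coe_eta]⟩
  have hbB : (b : V) ∈ B := ⟨b.2, by rw [Subtype.coe_eta]; exact hab⟩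
  have hcardA : g + 1 ≤ A.ncard := hsize A hAS hnbA _ haA
  have hcardB : g + 1 ≤ B.ncard := hsize B hBS hnbB _ hbB
  have hdisj : ∀ x, x ∈ A → x ∈ B → False := by
    rintro x ⟨hx1, hr⟩ ⟨hx2, hnr⟩
    exact hnr hr
  have hnoadj : ∀ x ∈ A, ∀ y ∈ B, ¬ G.Adj x y := by
    rintro x ⟨hxS, hxr⟩ y ⟨hyS, hyr⟩ hxy
    exact hyr (hxr.trans (hadj x y hxS hyS hxy).reachable)
  -- now counting
  set Af := A.toFinset with hAf
  set Bf := B.toFinset with hBf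
  set P : Finset (Sym2 V) := (Af ×ˢ Bf).image (fun p => s(p.1, p.2)) with hP
  have hPcard : P.card = Af.card * Bf.card := by
    rw [hP, Finset.card_image_of_injOn, Finset.card_product]
    rintro ⟨x, y⟩ hxy ⟨x', y'⟩ hxy' he
    simp only [Finset.coe_product, Set.mem_prod, hAf, hBf, Set.coe_toFinset] at hxy hxy'
    simp only [Sym2.eq, Sym2.rel_iff', Prod.mk.injEq, Prod.swap_prod_mk] at he
    rcases he with ⟨h1, h2⟩ | ⟨h1, h2⟩
    · simp [h1, h2]
    · exact absurd hxy'.1 (fun hh => hdisj x' hh (h2 ▸ hxy.2))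
  have hPsub : P ⊆ (⊤ : SimpleGraph V).edgeFinset \ G.edgeFinset := by
    intro e he
    rw [hP, Finset.mem_image] at he
    obtain ⟨⟨x, y⟩, hxy, rfl⟩ := he
    simp only [Finset.mem_product, hAf, hBf, Set.mem_toFinset] at hxy
    have hne : x ≠ y := fun hh => hdisj x hxy.1 (hh ▸ hxy.2)
    have hna : ¬ G.Adj x y := hnoadj x hxy.1 y hxy.2
    simp [SimpleGraph.mem_edgeFinset, SimpleGraph.mem_edgeSet, hne, hna]
  have hEsub : G.edgeFinset ⊆ (⊤ : SimpleGraph V).edgeFinset \ P := by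
    intro e he
    rw [Finset.mem_sdiff]
    constructor
    · rw [SimpleGraph.mem_edgeFinset] at he ⊢
      exact SimpleGraph.edgeSet_mono le_top he
    · intro heP
      have := hPsub heP
      rw [Finset.mem_sdiff] at this
      exact this.2 he
  have hPsub' : P ⊆ (⊤ : SimpleGraph V).edgeFinset := fun e he =>
    (Finset.mem_sdiff.mp (hPsub he)).1
  have hcount : G.edgeFinset.card ≤
      (⊤ : SimpleGraph V).edgeFinset.card - P.card := by
    calc G.edgeFinset.card ≤ ((⊤ : SimpleGraph V).edgeFinset \ P).card :=
          Finset.card_le_card hEsub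
      _ = (⊤ : SimpleGraph V).edgeFinset.card - P.card := Finset.card_sdiff_of_subset hPsub'
  have htop : (⊤ : SimpleGraph V).edgeFinset.card = (Fintype.card V).choose 2 :=
    SimpleGraph.card_edgeFinset_top_eq_card_choose_two
  have hsq : (g + 1) ^ 2 ≤ P.card := by
    rw [hPcard, pow_two]
    have h1 : g + 1 ≤ Af.card := by rwa [hAf, ← Set.ncard_eq_toFinset_card']
    have h2 : g + 1 ≤ Bf.card := by rwa [hBf, ← Set.ncard_eq_toFinset_card']
    exact Nat.mul_le_mul h1 h2
  have hfin : G.edgeSet.ncard = G.edgeFinset.card := by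
    rw [SimpleGraph.edgeFinset, Set.ncard_eq_toFinset_card']
  omega
end

section
/- Let G be a connected graph of order n admitting a g-good-neighbor cut, with 0 ≤ g ≤ min{Δ(G), ⌊(n−3)/2⌋}. Then κ(G) ≤ κ^g(G) ≤ n − 2g − 2. -/
open SimpleGraph

lemma gn_card_le {V : Type*} [Fintype V] (G : SimpleGraph V) (g : ℕ) (F : Finset V)
    (hF : IsGNCut G g F) : F.card ≤ Fintype.card V - 2 * g - 2 := by
  obtain ⟨hdisc, hnb⟩ := hF
  rw [SimpleGraph.Preconnected] at hdisc
  push_neg at hdisc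
  obtain ⟨a, b, hab⟩ := hdisc
  let A : Set V := {w | ∃ hw : w ∈ ((↑F : Set V)ᶜ), (G.induce ((↑F : Set V)ᶜ)).Reachable a ⟨w, hw⟩}
  let B : Set V := {w | ∃ hw : w ∈ ((↑F : Set V)ᶜ), (G.induce ((↑F : Set V)ᶜ)).Reachable b ⟨w, hw⟩}
  have hAs : A ⊆ ((↑F : Set V)ᶜ) := fun w hw => hw.1
  have hBs : B ⊆ ((↑F : Set V)ᶜ) := fun w hw => hw.1
  have hdisj : Disjoint A B := by
    rw [Set.disjoint_left]
    rintro w ⟨hw, hra⟩ ⟨hw', hrb⟩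
    exact hab (hra.trans hrb.symm)
  have key : ∀ (c : ↑((↑F : Set V)ᶜ)), g + 1 ≤
      ({w | ∃ hw : w ∈ ((↑F : Set V)ᶜ), (G.induce ((↑F : Set V)ᶜ)).Reachable c ⟨w, hw⟩} : Set V).ncard := by
    intro c
    have hsub : insert (c : V) (G.neighborSet c \ (↑F : Set V)) ⊆
        {w | ∃ hw : w ∈ ((↑F : Set V)ᶜ), (G.induce ((↑F : Set V)ᶜ)).Reachable c ⟨w, hw⟩} := by
      rintro w (rfl | hw)
      · exact ⟨c.2, by rfl⟩
      · refine ⟨hw.2, ?_⟩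
        exact SimpleGraph.Adj.reachable (by exact hw.1)
    have hnot : (c : V) ∉ G.neighborSet c \ (↑F : Set V) := by
      intro h
      exact G.irrefl h.1
    have h1 : (insert (c : V) (G.neighborSet c \ (↑F : Set V))).ncard =
        (G.neighborSet c \ (↑F : Set V)).ncard + 1 :=
      Set.ncard_insert_of_notMem hnot (Set.toFinite _)
    have h2 := hnb c (by have := c.2; simp only [Set.mem_compl_iff, Finset.mem_coe] at this; exact this)
    calc g + 1 ≤ (insert (c : V) (G.neighborSet c \ (↑F : Set V))).ncard := by omega
      _ ≤ _ := Set.ncard_le_ncard hsub (Set.toFinite _)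
  have hA : g + 1 ≤ A.ncard := key a
  have hB : g + 1 ≤ B.ncard := key b
  have hunion : A.ncard + B.ncard ≤ ((↑F : Set V)ᶜ).ncard := by
    rw [← Set.ncard_union_eq hdisj (Set.toFinite _) (Set.toFinite _)]
    exact Set.ncard_le_ncard (Set.union_subset hAs hBs) (Set.toFinite _)
  have hcompl := Set.ncard_add_ncard_compl (↑F : Set V)
  rw [Nat.card_eq_fintype_card] at hcompl
  have hFcard : (↑F : Set V).ncard = F.card := Set.ncard_coe_finset F
  omega

/-- For connected G of order n with a g-good-neighbor cut, 0 ≤ g ≤ min{Δ(G), ⌊(n−3)/2⌋}: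
κ(G) ≤ κ^g(G) ≤ n − 2g − 2. -/
theorem stmt5 {V : Type*} [Fintype V] (G : SimpleGraph V) [DecidableRel G.Adj]
    (hc : G.Connected) (g : ℕ) (hex : ∃ F : Finset V, IsGNCut G g F)
    (hg1 : g ≤ G.maxDegree) (hg2 : g ≤ (Fintype.card V - 3) / 2) :
    vConn G ≤ gnConn G g ∧ gnConn G g ≤ Fintype.card V - 2 * g - 2 := by
  obtain ⟨F, hF⟩ := hex
  constructor
  · have hne : gnConn G g ∈ {m | ∃ F : Finset V, IsGNCut G g F ∧ F.card = m} :=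
      Nat.sInf_mem ⟨F.card, F, hF, rfl⟩
    obtain ⟨F', hF', hc'⟩ := hne
    exact Nat.sInf_le ⟨F', hF'.1, hc'⟩
  · calc gnConn G g ≤ F.card := Nat.sInf_le ⟨F, hF, rfl⟩
      _ ≤ _ := gn_card_le G g F hF
end

section
/- For the complete bipartite graph K_{a,b} with a ≥ b ≥ 2: K_{a,b} has a 0-good-neighbor cut and κ^0(K_{a,b}) = b, and K_{a,b} has no g-good-neighbor cut for any g ≥ 1. -/
open SimpleGraph

-- auxiliary: preconnected if both sides meet complement
lemma precon_aux {a b : ℕ} (F : Finset (Fin a ⊕ Fin b)) (x : Fin a)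
    (hx : Sum.inl x ∉ F) (y : Fin b) (hy : Sum.inr y ∉ F) :
    ((completeBipartiteGraph (Fin a) (Fin b)).induce ((↑F : Set (Fin a ⊕ Fin b))ᶜ)).Preconnected := by
  have hx' : (Sum.inl x : Fin a ⊕ Fin b) ∈ ((↑F : Set (Fin a ⊕ Fin b))ᶜ) := by simpa using hx
  have hy' : (Sum.inr y : Fin a ⊕ Fin b) ∈ ((↑F : Set (Fin a ⊕ Fin b))ᶜ) := by simpa using hy
  set G := (completeBipartiteGraph (Fin a) (Fin b)).induce ((↑F : Set (Fin a ⊕ Fin b))ᶜ)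
  have key : ∀ u, G.Reachable u ⟨Sum.inr y, hy'⟩ := by
    rintro ⟨(u | u), hu⟩
    · exact SimpleGraph.Adj.reachable (by simp [G, completeBipartiteGraph])
    · refine Reachable.trans (SimpleGraph.Adj.reachable (v := (⟨Sum.inl x, hx'⟩ : _)) ?_)
        (SimpleGraph.Adj.reachable ?_)
      · simp [G, completeBipartiteGraph]
      · simp [G, completeBipartiteGraph]
  intro u v
  exact (key u).trans (key v).symm

lemma no_side_outside {a b : ℕ} (ha : 2 ≤ a) (F : Finset (Fin a ⊕ Fin b))
    (hF : ∀ z : Fin a ⊕ Fin b, z ∉ F → z.isLeft) :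
    ((completeBipartiteGraph (Fin a) (Fin b)).induce ((↑F : Set (Fin a ⊕ Fin b))ᶜ)) = ⊥ := by
  ext ⟨u, hu⟩ ⟨v, hv⟩
  simp only [comap_adj, completeBipartiteGraph_adj, SimpleGraph.bot_adj, iff_false]
  have hu' := hF u (by simpa using hu)
  have hv' := hF v (by simpa using hv)
  rcases u with u | u <;> rcases v with v | v <;> simp_all

/-- For K_{a,b}, a ≥ b ≥ 2: a 0-good-neighbor cut exists, κ^0 = b, and no
g-good-neighbor cut exists for g ≥ 1. -/
theorem stmt6 (a b : ℕ) (hb : 2 ≤ b) (hab : b ≤ a) :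
    (∃ F : Finset (Fin a ⊕ Fin b), IsGNCut (completeBipartiteGraph (Fin a) (Fin b)) 0 F) ∧
    gnConn (completeBipartiteGraph (Fin a) (Fin b)) 0 = b ∧
    ∀ g : ℕ, 1 ≤ g →
      ¬ ∃ F : Finset (Fin a ⊕ Fin b), IsGNCut (completeBipartiteGraph (Fin a) (Fin b)) g F := by

  have ha : 2 ≤ a := le_trans hb hab
  set F0 : Finset (Fin a ⊕ Fin b) := Finset.univ.image Sum.inr with hF0
  have hcard : F0.card = b := by
    rw [hF0, Finset.card_image_of_injective _ Sum.inr_injective, Finset.card_univ,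
      Fintype.card_fin]
  have hcut : IsGNCut (completeBipartiteGraph (Fin a) (Fin b)) 0 F0 := by
    constructor
    · have hbot := no_side_outside (b := b) ha F0 (by rintro (z | z) hz <;> simp_all [F0])
      rw [hbot]
      intro h
      have := reachable_bot.mp
        (h ⟨Sum.inl ⟨0, by omega⟩, by simp [F0]⟩ ⟨Sum.inl ⟨1, by omega⟩, by simp [F0]⟩)
      simp [Fin.ext_iff] at this
    · intro v _; exact Nat.zero_le _
  refine ⟨⟨F0, hcut⟩, ?_, ?_⟩
  · -- gnConn = b
    have hmem : b ∈ {m | ∃ F : Finset (Fin a ⊕ Fin b),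
        IsGNCut (completeBipartiteGraph (Fin a) (Fin b)) 0 F ∧ F.card = m} := ⟨F0, hcut, hcard⟩
    refine le_antisymm (Nat.sInf_le hmem) (le_csInf ⟨b, hmem⟩ ?_)
    rintro m ⟨F, ⟨hdisc, -⟩, rfl⟩
    by_contra hlt
    push_neg at hlt
    obtain ⟨x, hx⟩ : ∃ x : Fin a, Sum.inl x ∉ F := by
      by_contra h
      push_neg at h
      have : (Finset.univ.image (Sum.inl : Fin a → Fin a ⊕ Fin b)) ⊆ F := by
        intro z hz; simp at hz; obtain ⟨x, rfl⟩ := hz; exact h x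
      have := Finset.card_le_card this
      rw [Finset.card_image_of_injective _ Sum.inl_injective, Finset.card_univ,
        Fintype.card_fin] at this
      omega
    obtain ⟨y, hy⟩ : ∃ y : Fin b, Sum.inr y ∉ F := by
      by_contra h
      push_neg at h
      have : (Finset.univ.image (Sum.inr : Fin b → Fin a ⊕ Fin b)) ⊆ F := by
        intro z hz; simp at hz; obtain ⟨y, rfl⟩ := hz; exact h y
      have := Finset.card_le_card this
      rw [Finset.card_image_of_injective _ Sum.inr_injective, Finset.card_univ,
        Fintype.card_fin] at this
      omega
    exact hdisc (precon_aux F x hx y hy)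
  · -- no g-good cut for g ≥ 1
    rintro g hg ⟨F, hdisc, hnb⟩
    -- complement is nonempty since graph on empty type is preconnected
    obtain ⟨u, hu⟩ : ∃ u : Fin a ⊕ Fin b, u ∉ F := by
      by_contra h
      push_neg at h
      apply hdisc
      rintro ⟨v, hv⟩
      exact absurd (h v) (by simpa using hv)
    have hpos : 0 < ((completeBipartiteGraph (Fin a) (Fin b)).neighborSet u
        \ (↑F : Set (Fin a ⊕ Fin b))).ncard := lt_of_lt_of_le hg (hnb u hu)
    obtain ⟨w, hw⟩ := (Set.ncard_pos (Set.toFinite _)).mp hpos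
    obtain ⟨hadj, hwF⟩ := hw
    have hwF : w ∉ F := by simpa using hwF
    rcases u with u | u <;> rcases w with w | w <;>
      simp only [mem_neighborSet, completeBipartiteGraph_adj] at hadj <;> simp_all
    · exact hdisc (precon_aux F u hu w hwF)
    · exact hdisc (precon_aux F w hwF u hu)
end

section
/- For the wheel graph W_n with n ≥ 7 vertices, κ^g(W_n) = 3 for g = 0 and g = 1. -/
open SimpleGraph

/-- The wheel: a cycle on m vertices plus a hub (none) adjacent to all of them. -/
def wheel (m : ℕ) : SimpleGraph (Option (Fin m)) :=
  SimpleGraph.fromRel (fun x y =>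
    x = none ∨ ∃ i j : Fin m, x = some i ∧ y = some j ∧ (j : ℕ) = ((i : ℕ) + 1) % m)

/- ---------- auxiliary lemmas ---------- -/

lemma wheel_adj_hub (m : ℕ) (i : Fin m) : (wheel m).Adj none (some i) := by
  simp [wheel, SimpleGraph.fromRel_adj]

lemma wheel_adj_some {m : ℕ} (hm : 2 ≤ m) (i j : Fin m) (h : (j:ℕ) = ((i:ℕ)+1) % m) :
    (wheel m).Adj (some i) (some j) := by
  have hne : i ≠ j := by
    rintro rfl
    rcases Nat.lt_or_ge ((i:ℕ)+1) m with h'|h'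
    · rw [Nat.mod_eq_of_lt h'] at h; omega
    · have heq : (i:ℕ)+1 = m := by have := i.isLt; omega
      rw [heq, Nat.mod_self] at h
      omega
  simp only [wheel, SimpleGraph.fromRel_adj]
  exact ⟨by simpa using hne, Or.inl (Or.inr ⟨i, j, rfl, rfl, h⟩)⟩

lemma wheel_adj_cases {m : ℕ} {i j : Fin m} (h : (wheel m).Adj (some i) (some j)) :
    (j:ℕ) = ((i:ℕ)+1) % m ∨ (i:ℕ) = ((j:ℕ)+1) % m := by
  simp only [wheel, SimpleGraph.fromRel_adj] at h
  obtain ⟨-, h | h⟩ := h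
  · rcases h with h | ⟨a, b, ha, hb, hab⟩
    · exact absurd h (by simp)
    · left; cases ha; cases hb; exact hab
  · rcases h with h | ⟨a, b, ha, hb, hab⟩
    · exact absurd h (by simp)
    · right; cases ha; cases hb; exact hab

lemma fin_sub_one_val {m' : ℕ} (x : Fin (m'+2)) (hx : x ≠ 0) :
    ((x - 1 : Fin (m'+2)) : ℕ) = (x:ℕ) - 1 := by
  have hxv : 1 ≤ (x:ℕ) := by
    rcases Nat.eq_zero_or_pos (x:ℕ) with h | h
    · exact absurd (Fin.ext (by simp [h]) : x = 0) hx
    · exact h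
  rw [Fin.sub_def]
  show (m'+2 - ((1:Fin (m'+2)):ℕ) + (x:ℕ)) % (m'+2) = (x:ℕ) - 1
  rw [Fin.val_one]
  have : (m'+2 - 1 + (x:ℕ)) = ((x:ℕ) - 1) + (m'+2) := by omega
  rw [this, Nat.add_mod_right, Nat.mod_eq_of_lt (by have := x.isLt; omega)]

lemma fin_add_one_val {m' : ℕ} (p : Fin (m'+2)) :
    ((p + 1 : Fin (m'+2)) : ℕ) = ((p:ℕ) + 1) % (m'+2) := by
  rw [Fin.add_def, Fin.val_one]

lemma succ_mod {j m : ℕ} (hj : j < m) :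
    ((j+1) % m = j + 1 ∧ j + 1 < m) ∨ ((j+1) % m = 0 ∧ j + 1 = m) := by
  rcases Nat.lt_or_ge (j+1) m with h|h
  · exact Or.inl ⟨Nat.mod_eq_of_lt h, h⟩
  · have h' : j+1 = m := by omega
    exact Or.inr ⟨by rw [h', Nat.mod_self], h'⟩

lemma fin_succ_ne_self {m' : ℕ} (k : Fin (m'+2)) : k + 1 ≠ k := by
  intro h
  have h1 : ((k + 1 : Fin (m'+2)) : ℕ) = (k:ℕ) := congrArg Fin.val h
  rw [fin_add_one_val] at h1
  rcases succ_mod k.isLt with ⟨he, _⟩ | ⟨he, hm⟩ <;> omega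

/-- Walking backwards along the rim to the target `k+1`, when the only removed
rim vertex can be `k`. -/
lemma walk_to_target {m' : ℕ} (F : Finset (Option (Fin (m'+2)))) (k : Fin (m'+2))
    (hP : ∀ j : Fin (m'+2), some j ∈ F → j = k)
    (ht : some (k+1) ∈ ((↑F : Set (Option (Fin (m'+2))))ᶜ)) :
    ∀ (i : Fin (m'+2)) (hi : some i ∈ ((↑F : Set (Option (Fin (m'+2))))ᶜ)),
      ((wheel (m'+2)).induce ((↑F : Set (Option (Fin (m'+2))))ᶜ)).Reachable
        ⟨some i, hi⟩ ⟨some (k+1), ht⟩ := by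
  suffices H : ∀ (e : ℕ) (i : Fin (m'+2)), ((i - (k+1) : Fin (m'+2)) : ℕ) = e →
      ∀ (hi : some i ∈ ((↑F : Set (Option (Fin (m'+2))))ᶜ)),
      ((wheel (m'+2)).induce ((↑F : Set (Option (Fin (m'+2))))ᶜ)).Reachable
        ⟨some i, hi⟩ ⟨some (k+1), ht⟩ by
    intro i hi; exact H _ i rfl hi
  intro e
  induction e using Nat.strong_induction_on with
  | _ e IH =>
    intro i he hi
    by_cases hik : i = k + 1
    · subst hik
      exact Reachable.refl _
    · set p := i - 1 with hp
      have hp1 : p + 1 = i := sub_add_cancel i 1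
      have hpk : p ≠ k := by
        intro h
        exact hik (by rw [← hp1, h])
      have hpF : some p ∈ ((↑F : Set (Option (Fin (m'+2))))ᶜ) := by
        simp only [Set.mem_compl_iff, Finset.mem_coe]
        intro h
        exact hpk (hP p h)
      have hadj : (wheel (m'+2)).Adj (some p) (some i) := by
        apply wheel_adj_some (by omega)
        rw [← hp1, fin_add_one_val]
      have hx : (i - (k+1) : Fin (m'+2)) ≠ 0 := sub_ne_zero.mpr hik
      have hlt : ((p - (k+1) : Fin (m'+2)) : ℕ) < e := by
        have hrw : (p - (k+1) : Fin (m'+2)) = (i - (k+1)) - 1 := by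
          rw [hp]; exact sub_right_comm _ _ _
        rw [hrw, fin_sub_one_val _ hx, he]
        have : 1 ≤ ((i - (k+1) : Fin (m'+2)) : ℕ) := by
          rcases Nat.eq_zero_or_pos ((i - (k+1) : Fin (m'+2)) : ℕ) with h | h
          · exact absurd (Fin.ext (by simp [h])) hx
          · exact h
        omega
      have hreach := IH _ (he ▸ hlt) p rfl hpF
      have hstep : ((wheel (m'+2)).induce ((↑F : Set (Option (Fin (m'+2))))ᶜ)).Adj
          ⟨some i, hi⟩ ⟨some p, hpF⟩ := by
        simp only [comap_adj, Function.Embedding.coe_subtype]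
        exact hadj.symm
      exact (hstep.reachable).trans hreach

/-- Removing at most two vertices from a wheel with at least 3 rim vertices
keeps it connected. -/
lemma small_cut_preconnected {m' : ℕ} (F : Finset (Option (Fin (m'+2)))) (hF : F.card ≤ 2) :
    ((wheel (m'+2)).induce ((↑F : Set (Option (Fin (m'+2))))ᶜ)).Preconnected := by
  by_cases hnone : none ∈ F
  · -- hub removed; at most one rim vertex removed
    have hcard : (F.erase none).card ≤ 1 := by
      have := Finset.card_erase_of_mem hnone
      omega
    obtain ⟨k, hP⟩ : ∃ k : Fin (m'+2), ∀ j : Fin (m'+2), some j ∈ F → j = k := by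
      by_cases hk : ∃ k : Fin (m'+2), some k ∈ F
      · obtain ⟨k, hkF⟩ := hk
        refine ⟨k, fun j hj => ?_⟩
        have h1 : some j ∈ F.erase none := Finset.mem_erase.mpr ⟨by simp, hj⟩
        have h2 : some k ∈ F.erase none := Finset.mem_erase.mpr ⟨by simp, hkF⟩
        have := Finset.card_le_one.mp hcard _ h1 _ h2
        exact Option.some_injective _ this
      · exact ⟨0, fun j hj => absurd ⟨j, hj⟩ hk⟩
    have ht : some (k+1) ∈ ((↑F : Set (Option (Fin (m'+2))))ᶜ) := by
      simp only [Set.mem_compl_iff, Finset.mem_coe]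
      intro h
      exact fin_succ_ne_self k (by rw [hP _ h])
    intro u v
    obtain ⟨x, hx⟩ := u
    obtain ⟨y, hy⟩ := v
    have hxn : x ≠ none := by rintro rfl; exact hx (by simpa using hnone)
    have hyn : y ≠ none := by rintro rfl; exact hy (by simpa using hnone)
    obtain ⟨i, rfl⟩ := Option.ne_none_iff_exists'.mp hxn
    obtain ⟨j, rfl⟩ := Option.ne_none_iff_exists'.mp hyn
    exact (walk_to_target F k hP ht i hx).trans (walk_to_target F k hP ht j hy).symm
  · -- hub remains: everything is reachable through it
    have hhub : (none : Option (Fin (m'+2))) ∈ ((↑F : Set (Option (Fin (m'+2))))ᶜ) := by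
      simpa using hnone
    have key : ∀ u : ((↑F : Set (Option (Fin (m'+2))))ᶜ : Set (Option (Fin (m'+2)))),
        ((wheel (m'+2)).induce ((↑F : Set (Option (Fin (m'+2))))ᶜ)).Reachable u ⟨none, hhub⟩ := by
      rintro ⟨x, hx⟩
      cases x with
      | none => exact Reachable.refl _
      | some i =>
        have hadj : ((wheel (m'+2)).induce ((↑F : Set (Option (Fin (m'+2))))ᶜ)).Adj
            ⟨some i, hx⟩ ⟨none, hhub⟩ := by
          simp only [comap_adj, Function.Embedding.coe_subtype]
          exact (wheel_adj_hub _ i).symm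
        exact hadj.reachable
    intro u v
    exact (key u).trans (key v).symm

/-- For the wheel W_n with n ≥ 7 vertices, κ^g(W_n) = 3 for g = 0, 1. -/
theorem stmt8 (n : ℕ) (hn : 7 ≤ n) (g : ℕ) (hg : g ≤ 1) :
    gnConn (wheel (n - 1)) g = 3 := by
  obtain ⟨m', hm'⟩ : ∃ m', n - 1 = m' + 2 := ⟨n - 3, by omega⟩
  have hm4 : 4 ≤ m' := by omega
  rw [hm']
  set V := Option (Fin (m'+2))
  -- the candidate cut
  have h0 : (0:ℕ) < m'+2 := by omega
  have h1 : (1:ℕ) < m'+2 := by omega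
  have h2 : (2:ℕ) < m'+2 := by omega
  have h3 : (3:ℕ) < m'+2 := by omega
  have h5 : (5:ℕ) < m'+2 := by omega
  set a : Fin (m'+2) := ⟨0, h0⟩ with ha
  set b : Fin (m'+2) := ⟨3, h3⟩ with hb
  set F₀ : Finset V := {none, some a, some b} with hF₀
  have hcard : F₀.card = 3 := by
    rw [hF₀]
    rw [Finset.card_insert_of_notMem (by simp [ha, hb]), Finset.card_insert_of_notMem (by
      simp only [Finset.mem_singleton]
      intro h
      have := Option.some_injective _ h
      simp [ha, hb, Fin.ext_iff] at this)]
    simp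
  have hmemF₀ : ∀ x : V, x ∈ F₀ ↔ x = none ∨ x = some a ∨ x = some b := by
    intro x; simp [hF₀]
  -- vertices of interest
  have hv1 : (some (⟨1, h1⟩ : Fin (m'+2)) : V) ∈ ((↑F₀ : Set V)ᶜ) := by
    simp only [Set.mem_compl_iff, Finset.mem_coe, hmemF₀]
    push_neg
    refine ⟨by simp, fun h => absurd (congrArg Fin.val (Option.some.inj h)) (by decide : (1:ℕ) ≠ 0), fun h => absurd (congrArg Fin.val (Option.some.inj h)) (by decide : (1:ℕ) ≠ 3)⟩
  have hv2 : (some (⟨2, h2⟩ : Fin (m'+2)) : V) ∈ ((↑F₀ : Set V)ᶜ) := by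
    simp only [Set.mem_compl_iff, Finset.mem_coe, hmemF₀]
    push_neg
    refine ⟨by simp, fun h => absurd (congrArg Fin.val (Option.some.inj h)) (by decide : (2:ℕ) ≠ 0), fun h => absurd (congrArg Fin.val (Option.some.inj h)) (by decide : (2:ℕ) ≠ 3)⟩
  have hv5 : (some (⟨5, h5⟩ : Fin (m'+2)) : V) ∈ ((↑F₀ : Set V)ᶜ) := by
    simp only [Set.mem_compl_iff, Finset.mem_coe, hmemF₀]
    push_neg
    refine ⟨by simp, fun h => absurd (congrArg Fin.val (Option.some.inj h)) (by decide : (5:ℕ) ≠ 0), fun h => absurd (congrArg Fin.val (Option.some.inj h)) (by decide : (5:ℕ) ≠ 3)⟩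
  -- F₀ is a g-good-neighbor cut
  have hcut : IsGNCut (wheel (m'+2)) g F₀ := by
    constructor
    · -- not preconnected : {1,2} is separated from 5
      intro hpre
      obtain ⟨w⟩ := hpre ⟨_, hv1⟩ ⟨_, hv5⟩
      -- invariant
      have step : ∀ x y : ((↑F₀ : Set V)ᶜ : Set V),
          ((wheel (m'+2)).induce ((↑F₀ : Set V)ᶜ)).Adj x y →
          ((x : V) = some ⟨1, h1⟩ ∨ (x : V) = some ⟨2, h2⟩) →
          ((y : V) = some ⟨1, h1⟩ ∨ (y : V) = some ⟨2, h2⟩) := by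
        rintro ⟨x, hx⟩ ⟨y, hy⟩ hadj hQ
        simp only [comap_adj, Function.Embedding.coe_subtype] at hadj
        simp only at hQ ⊢
        have hyF : y ∉ F₀ := by simpa using hy
        have hyn : y ≠ none := by
          rintro rfl; exact hyF ((hmemF₀ none).mpr (Or.inl rfl))
        obtain ⟨j, rfl⟩ := Option.ne_none_iff_exists'.mp hyn
        have hja : j ≠ a := by
          rintro rfl; exact hyF ((hmemF₀ _).mpr (Or.inr (Or.inl rfl)))
        have hjb : j ≠ b := by
          rintro rfl; exact hyF ((hmemF₀ _).mpr (Or.inr (Or.inr rfl)))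
        have hja' : (j:ℕ) ≠ 0 := by
          intro h; exact hja (Fin.ext (by simp [ha, h]))
        have hjb' : (j:ℕ) ≠ 3 := by
          intro h; exact hjb (Fin.ext (by simp [hb, h]))
        rcases hQ with hQ | hQ
        · subst hQ
          rcases wheel_adj_cases hadj with h | h
          · right
            have : (j:ℕ) = 2 := by
              rw [h]; simp only []
              exact Nat.mod_eq_of_lt h2
            exact congrArg some (Fin.ext this)
          · exfalso
            rcases succ_mod j.isLt with ⟨e1, e2⟩ | ⟨e1, e2⟩ <;>
              simp only [] at h <;> omega
        · subst hQ
          rcases wheel_adj_cases hadj with h | h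
          · exfalso
            have : (j:ℕ) = 3 := by
              rw [h]; exact Nat.mod_eq_of_lt h3
            exact hjb' this
          · left
            have : (j:ℕ) = 1 := by
              rcases succ_mod j.isLt with ⟨e1, e2⟩ | ⟨e1, e2⟩ <;>
                simp only [] at h <;> omega
            exact congrArg some (Fin.ext this)
      -- propagate the invariant along the walk
      have main : ∀ {u v : ((↑F₀ : Set V)ᶜ : Set V)}
          (w : ((wheel (m'+2)).induce ((↑F₀ : Set V)ᶜ)).Walk u v),
          ((u : V) = some ⟨1, h1⟩ ∨ (u : V) = some ⟨2, h2⟩) →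
          ((v : V) = some ⟨1, h1⟩ ∨ (v : V) = some ⟨2, h2⟩) := by
        intro u v w
        induction w with
        | nil => exact id
        | cons hadj p ih => exact fun hq => ih (step _ _ hadj hq)
      have h5Q := main w (Or.inl rfl)
      rcases h5Q with h | h <;>
        · have := Option.some_injective _ h
          have := congrArg Fin.val this
          simp only [] at this
          omega
    · -- good-neighbor condition
      intro v hv
      have hvn : v ≠ none := by
        rintro rfl; exact hv ((hmemF₀ none).mpr (Or.inl rfl))
      obtain ⟨i, rfl⟩ := Option.ne_none_iff_exists'.mp hvn
      have hia : (i:ℕ) ≠ 0 := by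
        intro h
        exact hv ((hmemF₀ _).mpr (Or.inr (Or.inl (congrArg some (Fin.ext h)))))
      have hib : (i:ℕ) ≠ 3 := by
        intro h
        exact hv ((hmemF₀ _).mpr (Or.inr (Or.inr (congrArg some (Fin.ext h)))))
      -- find a neighbor outside F₀
      obtain ⟨w, hwadj, hwF⟩ : ∃ w : V, (wheel (m'+2)).Adj (some i) w ∧ w ∉ F₀ := by
        have him := i.isLt
        rcases Nat.lt_or_ge (i:ℕ) 5 with hlt | hge
        · -- i ∈ {1, 2, 4}
          interval_cases hiv : (i : ℕ)
          · omega
          · refine ⟨some ⟨2, h2⟩, wheel_adj_some (by omega) _ _ ?_, ?_⟩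
            · show (2:ℕ) = ((i:ℕ)+1) % (m'+2)
              rw [hiv, Nat.mod_eq_of_lt h2]
            · intro hmem
              rcases (hmemF₀ _).mp hmem with h | h | h
              · exact nomatch h
              · have := congrArg Fin.val (Option.some_injective _ h); simp [ha] at this
              · have := congrArg Fin.val (Option.some_injective _ h); simp [hb] at this
          · refine ⟨some ⟨1, h1⟩, (wheel_adj_some (by omega) ⟨1, h1⟩ i ?_).symm, ?_⟩
            · show (i:ℕ) = (1+1) % (m'+2)
              rw [hiv, Nat.mod_eq_of_lt h2]
            · intro hmem
              rcases (hmemF₀ _).mp hmem with h | h | h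
              · exact nomatch h
              · have := congrArg Fin.val (Option.some_injective _ h); simp [ha] at this
              · have := congrArg Fin.val (Option.some_injective _ h); simp [hb] at this
          · omega
          · refine ⟨some ⟨5, h5⟩, wheel_adj_some (by omega) _ _ ?_, ?_⟩
            · show (5:ℕ) = ((i:ℕ)+1) % (m'+2)
              rw [hiv, Nat.mod_eq_of_lt h5]
            · intro hmem
              rcases (hmemF₀ _).mp hmem with h | h | h
              · exact nomatch h
              · have := congrArg Fin.val (Option.some_injective _ h); simp [ha] at this
              · have := congrArg Fin.val (Option.some_injective _ h); simp [hb] at this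
        · -- i ≥ 5 : use predecessor i - 1 ≥ 4
          refine ⟨some ⟨(i:ℕ) - 1, by omega⟩, (wheel_adj_some (by omega) ⟨(i:ℕ)-1, by omega⟩ i ?_).symm, ?_⟩
          · show (i:ℕ) = ((i:ℕ) - 1 + 1) % (m'+2)
            rw [Nat.sub_add_cancel (by omega), Nat.mod_eq_of_lt him]
          · intro hmem
            rcases (hmemF₀ _).mp hmem with h | h | h
            · exact nomatch h
            · have := congrArg Fin.val (Option.some_injective _ h); simp [ha] at this; omega
            · have := congrArg Fin.val (Option.some_injective _ h); simp [hb] at this; omega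
      have hne : ((wheel (m'+2)).neighborSet (some i) \ (↑F₀ : Set V)).Nonempty := by
        exact ⟨w, hwadj, by simpa using hwF⟩
      have hpos : 0 < ((wheel (m'+2)).neighborSet (some i) \ (↑F₀ : Set V)).ncard :=
        (Set.ncard_pos (Set.toFinite _)).mpr hne
      omega
  -- conclude
  have h3mem : 3 ∈ {m | ∃ F : Finset V, IsGNCut (wheel (m'+2)) g F ∧ F.card = m} :=
    ⟨F₀, hcut, hcard⟩
  rw [gnConn]
  apply le_antisymm (Nat.sInf_le h3mem)
  by_contra hlt
  push_neg at hlt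
  obtain ⟨F, hFcut, hFcard⟩ := Nat.sInf_mem (⟨3, h3mem⟩ :
    Set.Nonempty {m | ∃ F : Finset V, IsGNCut (wheel (m'+2)) g F ∧ F.card = m})
  have hF2 : F.card ≤ 2 := by omega
  exact hFcut.1 (small_cut_preconnected F hF2)
end

section
/- Let T*_n be the tree obtained from a star K_{1,n−t−1} with center v and r ≥ 2 further stars K_{1,a_1−1},…,K_{1,a_r−1} with centers w_1,…,w_r (where each a_i ≥ 2 and a_1+…+a_r = t) by adding edges vw_1,…,vw_r. If 4 ≤ t ≤ (n+2)/2, then κ^1(T*_n) = n − t. -/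
open SimpleGraph

/-- The tree T*_n: a star K_{1,n−t−1} with center v (Sum.inl), its leaves
(Sum.inr (Sum.inl _)), and r further stars, the i-th with center ⟨i,0⟩ and
leaves ⟨i,k⟩ (k ≠ 0), with v joined to each center. -/
def Tstar (n t r : ℕ) (a : Fin r → ℕ) :
    SimpleGraph (Unit ⊕ Fin (n - t - 1) ⊕ (Σ i : Fin r, Fin (a i))) :=
  SimpleGraph.fromRel (fun x y =>
    match x, y with
    | Sum.inl _, Sum.inr (Sum.inl _) => True
    | Sum.inl _, Sum.inr (Sum.inr ⟨_, k⟩) => (k : ℕ) = 0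
    | Sum.inr (Sum.inr ⟨i, k⟩), Sum.inr (Sum.inr ⟨j, l⟩) =>
        (i : ℕ) = (j : ℕ) ∧ (k : ℕ) = 0 ∧ (l : ℕ) ≠ 0
    | _, _ => False)

namespace TstarAux

variable (n t r : ℕ) (a : Fin r → ℕ)

abbrev TV := Unit ⊕ Fin (n - t - 1) ⊕ (Σ i : Fin r, Fin (a i))

lemma adj_v_leaf (j : Fin (n-t-1)) :
    (Tstar n t r a).Adj (Sum.inl ()) (Sum.inr (Sum.inl j)) := by
  simp [Tstar, fromRel_adj]

lemma adj_v_star (i : Fin r) (k : Fin (a i)) :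
    (Tstar n t r a).Adj (Sum.inl ()) (Sum.inr (Sum.inr ⟨i,k⟩)) ↔ (k:ℕ) = 0 := by
  simp [Tstar, fromRel_adj]

lemma adj_ss (i j : Fin r) (k : Fin (a i)) (l : Fin (a j)) :
    (Tstar n t r a).Adj (Sum.inr (Sum.inr ⟨i,k⟩)) (Sum.inr (Sum.inr ⟨j,l⟩)) ↔
      ((i:ℕ) = j ∧ ((k:ℕ)=0 ∧ (l:ℕ)≠0 ∨ (l:ℕ)=0 ∧ (k:ℕ)≠0)) := by
  simp only [Tstar, fromRel_adj, ne_eq, Sum.inr.injEq]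
  constructor
  · rintro ⟨hne, (⟨h1,h2,h3⟩|⟨h1,h2,h3⟩)⟩
    · exact ⟨h1, Or.inl ⟨h2,h3⟩⟩
    · exact ⟨h1.symm, Or.inr ⟨h2,h3⟩⟩
  · rintro ⟨hij, (⟨h2,h3⟩|⟨h2,h3⟩)⟩
    · refine ⟨?_, Or.inl ⟨hij,h2,h3⟩⟩
      intro h
      obtain rfl : i = j := Fin.ext hij
      obtain rfl : k = l := by simpa using h
      exact h3 h2
    · refine ⟨?_, Or.inr ⟨hij.symm,h2,h3⟩⟩
      intro h
      obtain rfl : i = j := Fin.ext hij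
      obtain rfl : k = l := by simpa using h
      exact h3 h2

lemma nbhd_leaf (j : Fin (n-t-1)) :
    (Tstar n t r a).neighborSet (Sum.inr (Sum.inl j)) = {Sum.inl ()} := by
  ext x
  obtain (⟨⟩|y|⟨i,k⟩) := x
  · simpa [mem_neighborSet] using ((adj_v_leaf n t r a j).symm)
  · simp [mem_neighborSet, Tstar, fromRel_adj]
  · simp [mem_neighborSet, Tstar, fromRel_adj]

lemma nbhd_starleaf (ha : ∀ i, 2 ≤ a i) (i : Fin r) (k : Fin (a i)) (hk : (k:ℕ) ≠ 0) :
    (Tstar n t r a).neighborSet (Sum.inr (Sum.inr ⟨i,k⟩))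
      = {Sum.inr (Sum.inr ⟨i, ⟨0, by have := ha i; omega⟩⟩)} := by
  have h0 : 0 < a i := by have := ha i; omega
  ext x
  simp only [mem_neighborSet, Set.mem_singleton_iff]
  constructor
  · intro hadj
    obtain (⟨⟩|y|⟨j,l⟩) := x
    · exact absurd ((adj_v_star n t r a i k).mp hadj.symm) hk
    · exact absurd hadj (by simp [Tstar, fromRel_adj])
    · rw [adj_ss] at hadj
      obtain ⟨hij, (⟨h2,h3⟩|⟨h2,h3⟩)⟩ := hadj
      · exact absurd h2 hk
      · obtain rfl : i = j := Fin.ext hij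
        have hl : l = ⟨0, h0⟩ := Fin.ext h2
        rw [hl]
  · rintro rfl
    exact (adj_ss n t r a i i k _).mpr ⟨rfl, Or.inr ⟨rfl, hk⟩⟩

/-- Star index of a vertex (0 for v and its leaves). -/
def idx : TV n t r a → ℕ
  | Sum.inr (Sum.inr ⟨i, _⟩) => (i : ℕ)
  | _ => 0

/-- If v = inl () is outside F and the good-neighbor property holds, the
induced graph on the complement of F is preconnected. -/
lemma preconn_of_v_notin (ha : ∀ i, 2 ≤ a i) (F : Finset (TV n t r a))
    (hgn : ∀ v : TV n t r a, v ∉ F → 1 ≤ ((Tstar n t r a).neighborSet v \ (↑F : Set _)).ncard)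
    (hv : (Sum.inl () : TV n t r a) ∉ F) :
    ((Tstar n t r a).induce ((↑F : Set (TV n t r a))ᶜ)).Preconnected := by
  set G := Tstar n t r a with hG
  have hv' : (Sum.inl () : TV n t r a) ∈ ((↑F : Set (TV n t r a))ᶜ) := by simpa using hv
  have key : ∀ u : ((↑F : Set (TV n t r a))ᶜ : Set _),
      (G.induce ((↑F : Set (TV n t r a))ᶜ)).Reachable u ⟨Sum.inl (), hv'⟩ := by
    rintro ⟨x, hx⟩
    obtain (⟨⟩|y|⟨i,k⟩) := x
    · exact Reachable.refl _
    · refine Adj.reachable ?_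
      show G.Adj _ _
      exact (adj_v_leaf n t r a y).symm
    · by_cases hk : (k:ℕ) = 0
      · refine Adj.reachable ?_
        show G.Adj _ _
        exact ((adj_v_star n t r a i k).mpr hk).symm
      · have hxF : (Sum.inr (Sum.inr ⟨i,k⟩) : TV n t r a) ∉ F := by simpa using hx
        have h1 := hgn _ hxF
        have hne : ((G.neighborSet (Sum.inr (Sum.inr ⟨i,k⟩)) \ (↑F : Set _))).Nonempty := by
          by_contra hc
          rw [Set.not_nonempty_iff_eq_empty] at hc
          rw [hc] at h1; simp at h1
        obtain ⟨y, hy1, hy2⟩ := hne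
        rw [hG, nbhd_starleaf n t r a ha i k hk] at hy1
        subst hy1
        have hy' : (Sum.inr (Sum.inr ⟨i, ⟨0, by have := ha i; omega⟩⟩) : TV n t r a)
            ∈ ((↑F : Set (TV n t r a))ᶜ) := by simpa using hy2
        have step1 : (G.induce ((↑F : Set (TV n t r a))ᶜ)).Adj ⟨_, hx⟩ ⟨_, hy'⟩ := by
          show G.Adj (Sum.inr (Sum.inr ⟨i,k⟩)) (Sum.inr (Sum.inr ⟨i, _⟩))
          exact (adj_ss n t r a i i k _).mpr ⟨rfl, Or.inr ⟨rfl, hk⟩⟩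
        have step2 : (G.induce ((↑F : Set (TV n t r a))ᶜ)).Adj ⟨_, hy'⟩ ⟨Sum.inl (), hv'⟩ := by
          show G.Adj _ (Sum.inl ())
          exact ((adj_v_star n t r a i _).mpr rfl).symm
        exact (step1.reachable).trans step2.reachable
  intro u w
  exact (key u).trans (key w).symm

/-- The canonical cut: v together with all its leaves. -/
def F0 : Finset (TV n t r a) :=
  insert (Sum.inl ()) (Finset.univ.image (fun j : Fin (n-t-1) => Sum.inr (Sum.inl j)))

lemma mem_F0 (x : TV n t r a) :
    x ∈ F0 n t r a ↔ (x = Sum.inl () ∨ ∃ j, x = Sum.inr (Sum.inl j)) := by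
  simp [F0, eq_comm]

lemma card_F0 (h1 : 1 ≤ n - t) : (F0 n t r a).card = n - t := by
  rw [F0, Finset.card_insert_of_notMem (by simp), Finset.card_image_of_injective _
    (fun x y h => by simpa using h)]
  simp
  omega

lemma isGNCut_F0 (hr : 2 ≤ r) (ha : ∀ i, 2 ≤ a i) :
    IsGNCut (Tstar n t r a) 1 (F0 n t r a) := by
  set G := Tstar n t r a with hG
  set s : Set (TV n t r a) := ((↑(F0 n t r a) : Set (TV n t r a))ᶜ) with hs
  have hmem : ∀ x : TV n t r a, x ∈ s ↔ ∃ p : Σ i : Fin r, Fin (a i), x = Sum.inr (Sum.inr p) := by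
    intro x
    rw [hs, Set.mem_compl_iff, Finset.mem_coe, mem_F0]
    obtain (⟨⟩|y|p) := x <;> simp
  constructor
  · -- not preconnected
    intro hpre
    have h0r : (0 : ℕ) < r := by omega
    have h1r : (1 : ℕ) < r := by omega
    set i0 : Fin r := ⟨0, h0r⟩
    set i1 : Fin r := ⟨1, h1r⟩
    have hu0 : (Sum.inr (Sum.inr ⟨i0, ⟨0, by have := ha i0; omega⟩⟩) : TV n t r a) ∈ s :=
      (hmem _).mpr ⟨_, rfl⟩
    have hu1 : (Sum.inr (Sum.inr ⟨i1, ⟨0, by have := ha i1; omega⟩⟩) : TV n t r a) ∈ s :=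
      (hmem _).mpr ⟨_, rfl⟩
    have hreach := hpre ⟨_, hu0⟩ ⟨_, hu1⟩
    have hstep : ∀ u w : s, (G.induce s).Adj u w → idx n t r a u.val = idx n t r a w.val := by
      rintro ⟨x, hx⟩ ⟨y, hy⟩ hadj
      obtain ⟨p, rfl⟩ := (hmem x).mp hx
      obtain ⟨q, rfl⟩ := (hmem y).mp hy
      obtain ⟨i, k⟩ := p; obtain ⟨j, l⟩ := q
      have : G.Adj (Sum.inr (Sum.inr ⟨i,k⟩)) (Sum.inr (Sum.inr ⟨j,l⟩)) := hadj
      rw [hG, adj_ss] at this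
      exact this.1
    obtain ⟨p⟩ := hreach
    have hconst : ∀ {u w : s} (q : (G.induce s).Walk u w), idx n t r a u.val = idx n t r a w.val := by
      intro u w q
      induction q with
      | nil => rfl
      | cons hadj q ih => exact (hstep _ _ hadj).trans ih
    have h01 : (0 : ℕ) = 1 := hconst p
    omega
  · -- good neighbor property
    intro x hx
    have hx' : x ∈ s := by rwa [hs, Set.mem_compl_iff, Finset.mem_coe]
    obtain ⟨⟨i, k⟩, rfl⟩ := (hmem x).mp hx'
    by_cases hk : (k:ℕ) = 0
    · have hy : (Sum.inr (Sum.inr ⟨i, ⟨1, ha i⟩⟩) : TV n t r a) ∈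
          G.neighborSet (Sum.inr (Sum.inr ⟨i,k⟩)) \ (↑(F0 n t r a) : Set _) := by
        constructor
        · show G.Adj _ _
          exact (adj_ss n t r a i i k ⟨1, ha i⟩).mpr ⟨rfl, Or.inl ⟨hk, by simp⟩⟩
        · rw [← Set.mem_compl_iff, ← hs]
          exact (hmem _).mpr ⟨_, rfl⟩
      have := Set.ncard_pos (Set.toFinite _) |>.mpr ⟨_, hy⟩
      omega
    · have hy : (Sum.inr (Sum.inr ⟨i, ⟨0, by have := ha i; omega⟩⟩) : TV n t r a) ∈
          G.neighborSet (Sum.inr (Sum.inr ⟨i,k⟩)) \ (↑(F0 n t r a) : Set _) := by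
        constructor
        · show G.Adj _ _
          exact (adj_ss n t r a i i k _).mpr ⟨rfl, Or.inr ⟨rfl, hk⟩⟩
        · rw [← Set.mem_compl_iff, ← hs]
          exact (hmem _).mpr ⟨_, rfl⟩
      have := Set.ncard_pos (Set.toFinite _) |>.mpr ⟨_, hy⟩
      omega

lemma F0_subset (ha : ∀ i, 2 ≤ a i) (F : Finset (TV n t r a))
    (hF : IsGNCut (Tstar n t r a) 1 F) : F0 n t r a ⊆ F := by
  obtain ⟨hdis, hgn⟩ := hF
  have hvF : (Sum.inl () : TV n t r a) ∈ F := by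
    by_contra hv
    exact hdis (preconn_of_v_notin n t r a ha F hgn hv)
  intro x hx
  rw [mem_F0] at hx
  obtain (rfl | ⟨j, rfl⟩) := hx
  · exact hvF
  · by_contra hj
    have h1 := hgn _ hj
    rw [nbhd_leaf] at h1
    have : ({Sum.inl ()} \ (↑F : Set (TV n t r a))) = ∅ := by
      ext z; simp only [Set.mem_diff, Set.mem_singleton_iff, Set.mem_empty_iff_false, iff_false]
      rintro ⟨rfl, hz⟩
      exact hz hvF
    rw [this] at h1
    simp at h1

end TstarAux

/-- For 4 ≤ t ≤ (n+2)/2, r ≥ 2, a_i ≥ 2, ∑ a_i = t: κ^1(T*_n) = n − t. -/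
theorem stmt10 (n t r : ℕ) (a : Fin r → ℕ) (hr : 2 ≤ r) (ha : ∀ i, 2 ≤ a i)
    (hsum : ∑ i, a i = t) (ht4 : 4 ≤ t) (ht : 2 * t ≤ n + 2) :
    gnConn (Tstar n t r a) 1 = n - t := by
  have hnt : 1 ≤ n - t := by omega
  have hmem : (n - t) ∈ {m | ∃ F : Finset (TstarAux.TV n t r a),
      IsGNCut (Tstar n t r a) 1 F ∧ F.card = m} :=
    ⟨TstarAux.F0 n t r a, TstarAux.isGNCut_F0 n t r a hr ha, TstarAux.card_F0 n t r a hnt⟩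
  refine le_antisymm (Nat.sInf_le hmem) (le_csInf ⟨_, hmem⟩ ?_)
  rintro m ⟨F, hF, rfl⟩
  calc n - t = (TstarAux.F0 n t r a).card := (TstarAux.card_F0 n t r a hnt).symm
    _ ≤ F.card := Finset.card_le_card (TstarAux.F0_subset n t r a ha F hF)
end

section
/- Let n, g, k be integers with 1 ≤ g ≤ ⌊(n−k−2)/2⌋ and 1 ≤ k ≤ n − 2g − 2. If G is a graph on n vertices with at least C(n,2) − (n−k−g)(g+1) + 1 edges and G has a g-good-neighbor cut, then κ^g(G) ≥ k. -/
open SimpleGraph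

/-- If 1 ≤ g ≤ ⌊(n−k−2)/2⌋, 1 ≤ k ≤ n − 2g − 2, G has n vertices, at least
C(n,2) − (n−k−g)(g+1) + 1 edges, and a g-good-neighbor cut, then κ^g(G) ≥ k. -/
theorem stmt16 {V : Type*} [Fintype V] (G : SimpleGraph V) (n k g : ℕ)
    (hn : Fintype.card V = n) (hg : 1 ≤ g) (hk : 1 ≤ k)
    (hbound : k + 2 * g + 2 ≤ n)
    (hedges : ((n.choose 2 : ℤ) - ((n : ℤ) - k - g) * ((g : ℤ) + 1) + 1)
      ≤ (G.edgeSet.ncard : ℤ))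
    (hex : ∃ F : Finset V, IsGNCut G g F) :
    k ≤ gnConn G g := by
  classical
  obtain ⟨F₀, hF₀⟩ := hex
  refine le_csInf ⟨F₀.card, F₀, hF₀, rfl⟩ ?_
  rintro m ⟨F, ⟨hdis, hnb⟩, rfl⟩
  by_contra hlt
  push_neg at hlt
  set S : Set V := (↑F : Set V)ᶜ with hS
  rw [SimpleGraph.Preconnected] at hdis
  push_neg at hdis
  obtain ⟨u, v, huv⟩ := hdis
  set A : Finset V :=
    Finset.univ.filter (fun w => ∃ h : w ∈ S, (G.induce S).Reachable u ⟨w, h⟩) with hA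
  set B : Finset V := Finset.univ.filter (fun w => w ∈ S ∧ w ∉ A) with hB
  have hmemA : ∀ w, w ∈ A ↔ ∃ h : w ∈ S, (G.induce S).Reachable u ⟨w, h⟩ := by
    intro w; simp [hA]
  have hmemB : ∀ w, w ∈ B ↔ w ∈ S ∧ w ∉ A := by
    intro w; simp [hB]
  have hAS : ∀ w ∈ A, w ∈ S := by
    intro w hw; exact ((hmemA w).1 hw).1
  have hAclosed : ∀ w x, w ∈ A → x ∈ S → G.Adj w x → x ∈ A := by
    intro w x hw hx hadj
    obtain ⟨hwS, hreach⟩ := (hmemA w).1 hw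
    refine (hmemA x).2 ⟨hx, hreach.trans (SimpleGraph.Adj.reachable ?_)⟩
    exact hadj
  have huA : u.1 ∈ A := (hmemA u.1).2 ⟨u.2, by exact SimpleGraph.Reachable.refl _⟩
  have hvB : v.1 ∈ B := by
    refine (hmemB v.1).2 ⟨v.2, fun hvA => ?_⟩
    obtain ⟨hvS, hreach⟩ := (hmemA v.1).1 hvA
    exact huv (by convert hreach)
  have hnoadj : ∀ a ∈ A, ∀ b ∈ B, ¬ G.Adj a b := by
    intro a ha b hb hadj
    exact ((hmemB b).1 hb).2 (hAclosed a b ha ((hmemB b).1 hb).1 hadj)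
  have hne : ∀ a ∈ A, ∀ b ∈ B, a ≠ b := by
    intro a ha b hb h; exact ((hmemB b).1 hb).2 (h ▸ ha)
  -- size of A
  have hgA : g + 1 ≤ A.card := by
    have hnbu := hnb u.1 (by exact u.2)
    have hsub : insert u.1 (G.neighborSet u.1 \ (↑F : Set V)) ⊆ (↑A : Set V) := by
      intro x hx
      rcases hx with rfl | ⟨hadj, hxF⟩
      · exact huA
      · exact hAclosed u.1 x huA hxF hadj
    have hnotmem : u.1 ∉ (G.neighborSet u.1 \ (↑F : Set V)) := by
      intro h; exact G.loopless.irrefl u.1 h.1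
    have h1 : (insert u.1 (G.neighborSet u.1 \ (↑F : Set V))).ncard
        = (G.neighborSet u.1 \ (↑F : Set V)).ncard + 1 :=
      Set.ncard_insert_of_notMem hnotmem (Set.toFinite _)
    have h2 := Set.ncard_le_ncard hsub (Set.toFinite _)
    rw [Set.ncard_coe_finset] at h2
    omega
  -- size of B, via closure of B
  have hBclosed : ∀ w x, w ∈ B → x ∈ S → G.Adj w x → x ∈ B := by
    intro w x hw hx hadj
    refine (hmemB x).2 ⟨hx, fun hxA => ?_⟩
    exact ((hmemB w).1 hw).2 (hAclosed x w hxA ((hmemB w).1 hw).1 hadj.symm)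
  have hgB : g + 1 ≤ B.card := by
    have hnbv := hnb v.1 (by exact v.2)
    have hsub : insert v.1 (G.neighborSet v.1 \ (↑F : Set V)) ⊆ (↑B : Set V) := by
      intro x hx
      rcases hx with rfl | ⟨hadj, hxF⟩
      · exact hvB
      · exact hBclosed v.1 x hvB hxF hadj
    have hnotmem : v.1 ∉ (G.neighborSet v.1 \ (↑F : Set V)) := by
      intro h; exact G.loopless.irrefl v.1 h.1
    have h1 : (insert v.1 (G.neighborSet v.1 \ (↑F : Set V))).ncard
        = (G.neighborSet v.1 \ (↑F : Set V)).ncard + 1 :=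
      Set.ncard_insert_of_notMem hnotmem (Set.toFinite _)
    have h2 := Set.ncard_le_ncard hsub (Set.toFinite _)
    rw [Set.ncard_coe_finset] at h2
    omega
  -- A ∪ B = Fᶜ
  have hunion : A ∪ B = Fᶜ := by
    ext w
    constructor
    · intro hw
      rcases Finset.mem_union.1 hw with h | h
      · exact Finset.mem_compl.2 (hAS w h)
      · exact Finset.mem_compl.2 ((hmemB w).1 h).1
    · intro hw
      by_cases hwA : w ∈ A
      · exact Finset.mem_union.2 (Or.inl hwA)
      · exact Finset.mem_union.2 (Or.inr ((hmemB w).2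
          ⟨Finset.mem_compl.1 hw, hwA⟩))
  have hdisAB : Disjoint A B := by
    rw [Finset.disjoint_left]
    intro a ha hb
    exact ((hmemB a).1 hb).2 ha
  have hcardsum : A.card + B.card + F.card = n := by
    have := Finset.card_union_of_disjoint hdisAB
    rw [hunion, Finset.card_compl, hn] at this
    have hF : F.card ≤ n := hn ▸ Finset.card_le_univ F
    omega
  -- edge counting
  set M : Finset (Sym2 V) := (A ×ˢ B).image (fun p => s(p.1, p.2)) with hM
  have hMcard : M.card = A.card * B.card := by
    rw [hM, Finset.card_image_of_injOn, Finset.card_product]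
    rintro ⟨a, b⟩ hab ⟨c, d⟩ hcd h
    simp only [Finset.mem_coe, Finset.mem_product] at hab hcd
    rw [Sym2.eq_iff] at h
    rcases h with ⟨rfl, rfl⟩ | ⟨rfl, rfl⟩
    · rfl
    · exact absurd rfl (hne a hab.1 a hcd.2)
  have hMtop : M ⊆ (⊤ : SimpleGraph V).edgeFinset := by
    intro e he
    rw [hM, Finset.mem_image] at he
    obtain ⟨⟨a, b⟩, hab, rfl⟩ := he
    simp only [Finset.mem_product] at hab
    rw [SimpleGraph.mem_edgeFinset, SimpleGraph.mem_edgeSet]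
    exact (SimpleGraph.top_adj _ _).mpr (hne a hab.1 b hab.2)
  have hMdisj : Disjoint M G.edgeFinset := by
    rw [Finset.disjoint_left]
    intro e he heG
    rw [hM, Finset.mem_image] at he
    obtain ⟨⟨a, b⟩, hab, rfl⟩ := he
    simp only [Finset.mem_product] at hab
    rw [SimpleGraph.mem_edgeFinset, SimpleGraph.mem_edgeSet] at heG
    exact hnoadj a hab.1 b hab.2 heG
  have hGtop : G.edgeFinset ⊆ (⊤ : SimpleGraph V).edgeFinset := by
    intro e he
    rw [SimpleGraph.mem_edgeFinset] at he ⊢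
    induction e using Sym2.ind with
    | _ a b =>
      rw [SimpleGraph.mem_edgeSet] at he ⊢
      exact (SimpleGraph.top_adj _ _).mpr he.ne
  have hcount : G.edgeFinset.card + A.card * B.card ≤ n.choose 2 := by
    have h1 : (G.edgeFinset ∪ M).card ≤ (⊤ : SimpleGraph V).edgeFinset.card :=
      Finset.card_le_card (Finset.union_subset hGtop hMtop)
    rw [Finset.card_union_of_disjoint hMdisj.symm, hMcard] at h1
    rwa [SimpleGraph.card_edgeFinset_top_eq_card_choose_two, hn] at h1
  have hecard : G.edgeSet.ncard = G.edgeFinset.card := by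
    simp [Set.ncard_eq_toFinset_card', SimpleGraph.edgeFinset]
  -- final arithmetic in ℤ
  rw [hecard] at hedges
  have ha : (g : ℤ) + 1 ≤ (A.card : ℤ) := by exact_mod_cast hgA
  have hb : (g : ℤ) + 1 ≤ (B.card : ℤ) := by exact_mod_cast hgB
  have hsum : (A.card : ℤ) + B.card + F.card = n := by exact_mod_cast hcardsum
  have hm : (F.card : ℤ) + 1 ≤ k := by exact_mod_cast hlt
  have hbound' : (k : ℤ) + 2 * g + 2 ≤ n := by exact_mod_cast hbound
  have hcount' : (G.edgeFinset.card : ℤ) + (A.card : ℤ) * B.card ≤ (n.choose 2 : ℤ) := by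
    exact_mod_cast hcount
  nlinarith [mul_nonneg (by linarith : (0:ℤ) ≤ (A.card : ℤ) - (g + 1))
      (by linarith : (0:ℤ) ≤ (B.card : ℤ) - (g + 1)),
    mul_nonneg (by positivity : (0:ℤ) ≤ (g:ℤ) + 1)
      (by linarith : (0:ℤ) ≤ (k : ℤ) - 1 - F.card)]
end

section
/- Monotonicity under spanning subgraphs fails for κ^g when g ≥ 1: there exist a connected graph G and a connected spanning subgraph H of G such that both admit g-good-neighbor cuts and κ^g(H) > κ^g(G). (In contrast, for g = 0, if H is a spanning subgraph of a connected graph G and both are connected non-complete, then κ^0(H) ≤ κ^0(G).) -/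
open SimpleGraph

section Aux

variable {V : Type*}

lemma walk_invar (G : SimpleGraph V) (P : V → Prop)
    (hP : ∀ a b, G.Adj a b → P a → P b) {u w : V} (p : G.Walk u w) : P u → P w := by
  induction p with
  | nil => exact id
  | cons h p ih => exact fun hu => ih (hP _ _ h hu)

lemma reach_invar (G : SimpleGraph V) (P : V → Prop)
    (hP : ∀ a b, G.Adj a b → P a → P b) {u w : V} (h : G.Reachable u w) (hu : P u) : P w := by
  obtain ⟨p⟩ := h
  exact walk_invar G P hP p hu

end Aux

lemma le_ncard_attach {n : ℕ} (N : Finset ℕ) (hN : ∀ i ∈ N, i < n) (s : Set (Fin n))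
    (hsub : ∀ i, (hi : i ∈ N) → (⟨i, hN i hi⟩ : Fin n) ∈ s) : N.card ≤ s.ncard := by
  have h1 : ((N.attachFin hN : Finset (Fin n)) : Set (Fin n)) ⊆ s := by
    intro x hx
    simp only [Finset.mem_coe, Finset.mem_attachFin] at hx
    have := hsub x.val hx
    simpa using this
  calc N.card = (N.attachFin hN).card := (Finset.card_attachFin _ _).symm
    _ = ((N.attachFin hN : Finset (Fin n)) : Set (Fin n)).ncard := (Set.ncard_coe_finset _).symm
    _ ≤ s.ncard := Set.ncard_le_ncard h1 (Set.toFinite s)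

lemma ncard_le_bound {n : ℕ} (s : Set (Fin n)) (a b : ℕ) (hb : b < n)
    (h : ∀ u ∈ s, a ≤ u.val ∧ u.val ≤ b) : s.ncard ≤ b + 1 - a := by
  have hN : ∀ i ∈ Finset.Icc a b, i < n := fun i hi =>
    lt_of_le_of_lt (Finset.mem_Icc.mp hi).2 hb
  have h1 : s ⊆ (((Finset.Icc a b).attachFin hN : Finset (Fin n)) : Set (Fin n)) := by
    intro x hx
    simp only [Finset.mem_coe, Finset.mem_attachFin, Finset.mem_Icc]
    exact h x hx
  calc s.ncard ≤ (((Finset.Icc a b).attachFin hN : Finset (Fin n)) : Set (Fin n)).ncard :=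
        Set.ncard_le_ncard h1 (Set.toFinite _)
    _ = b + 1 - a := by rw [Set.ncard_coe_finset, Finset.card_attachFin, Nat.card_Icc]

/-- Adjacency for the bigger graph `G`: two cliques `{0,…,g+1}` and `{g+2,…,2g+4}`,
plus connector edges `0 – (g+2)` and `0 – (g+3)`. -/
def Gadj (g : ℕ) (x y : Fin (2*g+5)) : Prop :=
  x.val ≠ y.val ∧ ((x.val ≤ g+1 ∧ y.val ≤ g+1) ∨ (g+2 ≤ x.val ∧ g+2 ≤ y.val) ∨
    (x.val = 0 ∧ (y.val = g+2 ∨ y.val = g+3)) ∨ (y.val = 0 ∧ (x.val = g+2 ∨ x.val = g+3)))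

/-- Adjacency for the spanning subgraph `H`: remove the clique edge `g – (g+1)`. -/
def Hadj (g : ℕ) (x y : Fin (2*g+5)) : Prop :=
  Gadj g x y ∧ ¬((x.val = g ∧ y.val = g + 1) ∨ (x.val = g + 1 ∧ y.val = g))

def exG (g : ℕ) : SimpleGraph (Fin (2*g+5)) where
  Adj := Gadj g
  symm := ⟨by intro x y h; unfold Gadj at h ⊢; omega⟩
  loopless := ⟨by intro x h; exact h.1 rfl⟩

def exH (g : ℕ) : SimpleGraph (Fin (2*g+5)) where
  Adj := Hadj g
  symm := ⟨by intro x y h; unfold Hadj Gadj at h ⊢; omega⟩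
  loopless := ⟨by intro x h; exact h.1.1 rfl⟩

lemma Gadj_to (g : ℕ) (v : Fin (2*g+5)) (j : ℕ) (hj : j < 2*g+5)
    (h : v.val ≠ j ∧ ((v.val ≤ g+1 ∧ j ≤ g+1) ∨ (g+2 ≤ v.val ∧ g+2 ≤ j) ∨
      (v.val = 0 ∧ (j = g+2 ∨ j = g+3)) ∨ (j = 0 ∧ (v.val = g+2 ∨ v.val = g+3)))) :
    (exG g).Adj v ⟨j, hj⟩ :=
  ⟨h.1, h.2⟩

lemma Hadj_to (g : ℕ) (v : Fin (2*g+5)) (j : ℕ) (hj : j < 2*g+5)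
    (h : (v.val ≠ j ∧ ((v.val ≤ g+1 ∧ j ≤ g+1) ∨ (g+2 ≤ v.val ∧ g+2 ≤ j) ∨
      (v.val = 0 ∧ (j = g+2 ∨ j = g+3)) ∨ (j = 0 ∧ (v.val = g+2 ∨ v.val = g+3)))) ∧
      ¬((v.val = g ∧ j = g + 1) ∨ (v.val = g + 1 ∧ j = g))) :
    (exH g).Adj v ⟨j, hj⟩ :=
  ⟨⟨h.1.1, h.1.2⟩, h.2⟩


lemma Hadj_mk (g i j : ℕ) (hi : i < 2*g+5) (hj : j < 2*g+5)
    (h : (i ≠ j ∧ ((i ≤ g+1 ∧ j ≤ g+1) ∨ (g+2 ≤ i ∧ g+2 ≤ j) ∨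
      (i = 0 ∧ (j = g+2 ∨ j = g+3)) ∨ (j = 0 ∧ (i = g+2 ∨ i = g+3)))) ∧
      ¬((i = g ∧ j = g + 1) ∨ (i = g + 1 ∧ j = g))) :
    (exH g).Adj ⟨i, hi⟩ ⟨j, hj⟩ :=
  ⟨⟨h.1.1, h.1.2⟩, h.2⟩

lemma Hadj_from (g : ℕ) (i : ℕ) (hi : i < 2*g+5) (u : Fin (2*g+5))
    (h : (exH g).Adj ⟨i, hi⟩ u) :
    (i ≠ u.val ∧ ((i ≤ g+1 ∧ u.val ≤ g+1) ∨ (g+2 ≤ i ∧ g+2 ≤ u.val) ∨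
      (i = 0 ∧ (u.val = g+2 ∨ u.val = g+3)) ∨ (u.val = 0 ∧ (i = g+2 ∨ i = g+3)))) ∧
      ¬((i = g ∧ u.val = g + 1) ∨ (i = g + 1 ∧ u.val = g)) :=
  ⟨⟨h.1.1, h.1.2⟩, h.2⟩

lemma HleG (g : ℕ) : exH g ≤ exG g := by
  intro x y h
  exact h.1

lemma Hreach0 (g : ℕ) (hg : 1 ≤ g) (v : Fin (2*g+5)) :
    (exH g).Reachable v ⟨0, by omega⟩ := by
  by_cases h0 : v.val = 0
  · have : v = ⟨0, by omega⟩ := Fin.ext h0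
    rw [this]
  · rcases Nat.lt_or_ge v.val (g+4) with hA | hB
    · exact (Hadj_to g v 0 (by omega) (by omega)).reachable
    · exact (Hadj_to g v (g+2) (by omega) (by omega)).reachable.trans
        (Hadj_mk g (g+2) 0 (by omega) (by omega) (by omega)).reachable

lemma Hconn (g : ℕ) (hg : 1 ≤ g) : (exH g).Connected := by
  rw [SimpleGraph.connected_iff]
  exact ⟨fun u w => (Hreach0 g hg u).trans (Hreach0 g hg w).symm, ⟨⟨0, by omega⟩⟩⟩

lemma Hpre_induce (g : ℕ) (hg : 1 ≤ g) (s : Set (Fin (2*g+5)))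
    (h0 : (⟨0, by omega⟩ : Fin (2*g+5)) ∈ s)
    (hc : (⟨g+2, by omega⟩ : Fin (2*g+5)) ∈ s ∨ (⟨g+3, by omega⟩ : Fin (2*g+5)) ∈ s) :
    ((exH g).induce s).Preconnected := by
  have key : ∀ v : s, ((exH g).induce s).Reachable v ⟨⟨0, by omega⟩, h0⟩ := by
    rintro ⟨v, hv⟩
    by_cases h0' : v.val = 0
    · have : (⟨v, hv⟩ : s) = ⟨⟨0, by omega⟩, h0⟩ := Subtype.ext (Fin.ext h0')
      rw [this]
    · rcases Nat.lt_or_ge v.val (g+4) with hA | hB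
      · exact SimpleGraph.Adj.reachable
          (show (exH g).Adj v ⟨0, by omega⟩ from Hadj_to g v 0 (by omega) (by omega))
      · rcases hc with hc | hc
        · exact (SimpleGraph.Adj.reachable
            (show (exH g).Adj v ⟨g+2, by omega⟩ from Hadj_to g v (g+2) (by omega) (by omega))
              : ((exH g).induce s).Reachable ⟨v, hv⟩ ⟨⟨g+2, by omega⟩, hc⟩).trans
            (SimpleGraph.Adj.reachable
              (Hadj_mk g (g+2) 0 (by omega) (by omega) (by omega)))
        · exact (SimpleGraph.Adj.reachable
            (show (exH g).Adj v ⟨g+3, by omega⟩ from Hadj_to g v (g+3) (by omega) (by omega))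
              : ((exH g).induce s).Reachable ⟨v, hv⟩ ⟨⟨g+3, by omega⟩, hc⟩).trans
            (SimpleGraph.Adj.reachable
              (Hadj_mk g (g+3) 0 (by omega) (by omega) (by omega)))
  exact fun u w => (key u).trans (key w).symm

lemma G_not_pre (g : ℕ) (hg : 1 ≤ g) :
    ¬ ((exG g).induce ((↑({⟨0, by omega⟩} : Finset (Fin (2*g+5))) : Set (Fin (2*g+5)))ᶜ)).Preconnected := by
  intro hpre
  set s : Set (Fin (2*g+5)) :=
    (↑({⟨0, by omega⟩} : Finset (Fin (2*g+5))) : Set (Fin (2*g+5)))ᶜ with hs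
  have hmem : ∀ (i : ℕ) (hi : i < 2*g+5), i ≠ 0 → (⟨i, hi⟩ : Fin (2*g+5)) ∈ s := by
    intro i hi hx
    simp only [hs, Set.mem_compl_iff, Finset.coe_singleton, Set.mem_singleton_iff]
    intro h
    exact hx (congrArg Fin.val h)
  have hu : (⟨1, by omega⟩ : Fin (2*g+5)) ∈ s := hmem 1 (by omega) (by omega)
  have hw : (⟨g+2, by omega⟩ : Fin (2*g+5)) ∈ s := hmem (g+2) (by omega) (by omega)
  have hinv := reach_invar ((exG g).induce s) (fun x => (x : Fin (2*g+5)).val ≤ g+1)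
    ?_ (hpre ⟨⟨1, by omega⟩, hu⟩ ⟨⟨g+2, by omega⟩, hw⟩) (show (1:ℕ) ≤ g+1 by omega)
  · have hinv' : g + 2 ≤ g + 1 := hinv
    omega
  · intro a b hab ha
    have hab' : Gadj g ↑a ↑b := hab
    have ha0 : (↑a : Fin (2*g+5)).val ≠ 0 := by
      intro h
      exact a.2 (by simp only [Finset.coe_singleton, Set.mem_singleton_iff]; exact Fin.ext h)
    have hb0 : (↑b : Fin (2*g+5)).val ≠ 0 := by
      intro h
      exact b.2 (by simp only [Finset.coe_singleton, Set.mem_singleton_iff]; exact Fin.ext h)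
    obtain ⟨h1, h2⟩ := hab'
    omega

lemma H_not_pre (g : ℕ) (hg : 1 ≤ g) :
    ¬ ((exH g).induce ((↑({⟨g+2, by omega⟩, ⟨g+3, by omega⟩} : Finset (Fin (2*g+5))) :
      Set (Fin (2*g+5)))ᶜ)).Preconnected := by
  intro hpre
  set s : Set (Fin (2*g+5)) :=
    (↑({⟨g+2, by omega⟩, ⟨g+3, by omega⟩} : Finset (Fin (2*g+5))) : Set (Fin (2*g+5)))ᶜ with hs
  have hmem : ∀ (i : ℕ) (hi : i < 2*g+5), i ≠ g+2 → i ≠ g+3 → (⟨i, hi⟩ : Fin (2*g+5)) ∈ s := by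
    intro i hi hx2 hx3
    simp only [hs, Set.mem_compl_iff, Finset.coe_insert, Set.mem_insert_iff,
      Finset.coe_singleton, Set.mem_singleton_iff]
    rintro (h | h)
    · exact hx2 (congrArg Fin.val h)
    · exact hx3 (congrArg Fin.val h)
  have hnm : ∀ x : Fin (2*g+5), x ∈ s → x.val ≠ g+2 ∧ x.val ≠ g+3 := by
    intro x hx
    simp only [hs, Set.mem_compl_iff, Finset.coe_insert, Set.mem_insert_iff,
      Finset.coe_singleton, Set.mem_singleton_iff] at hx
    push_neg at hx
    exact ⟨fun h => hx.1 (Fin.ext h), fun h => hx.2 (Fin.ext h)⟩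
  have hu : (⟨0, by omega⟩ : Fin (2*g+5)) ∈ s := hmem 0 (by omega) (by omega) (by omega)
  have hw : (⟨g+4, by omega⟩ : Fin (2*g+5)) ∈ s := hmem (g+4) (by omega) (by omega) (by omega)
  have hinv := reach_invar ((exH g).induce s) (fun x => (x : Fin (2*g+5)).val ≤ g+1)
    ?_ (hpre ⟨⟨0, by omega⟩, hu⟩ ⟨⟨g+4, by omega⟩, hw⟩) (show (0:ℕ) ≤ g+1 by omega)
  · have hinv' : g + 4 ≤ g + 1 := hinv
    omega
  · intro a b hab ha
    have hab' : Gadj g ↑a ↑b := hab.1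
    have hb := hnm _ b.2
    obtain ⟨h1, h2⟩ := hab'
    omega

lemma cutG (g : ℕ) (hg : 1 ≤ g) :
    IsGNCut (exG g) g ({⟨0, by omega⟩} : Finset (Fin (2*g+5))) := by
  refine ⟨G_not_pre g hg, ?_⟩
  intro v hv
  have hv0 : v.val ≠ 0 := fun h => hv (Finset.mem_singleton.mpr (Fin.ext h))
  have hvlt := v.isLt
  by_cases hA : v.val ≤ g+1
  · have hN : ∀ i ∈ (Finset.Icc 1 (g+1)).erase v.val, i < 2*g+5 := by
      intro i hi
      have := (Finset.mem_Icc.mp (Finset.mem_of_mem_erase hi)).2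
      omega
    have hcard : ((Finset.Icc 1 (g+1)).erase v.val).card = g := by
      rw [Finset.card_erase_of_mem (Finset.mem_Icc.mpr ⟨by omega, hA⟩), Nat.card_Icc]
      omega
    refine le_trans ?_ (le_ncard_attach _ hN _ ?_)
    · omega
    intro i hi
    obtain ⟨hne, hicc⟩ := Finset.mem_erase.mp hi
    obtain ⟨hi1, hi2⟩ := Finset.mem_Icc.mp hicc
    refine ⟨Gadj_to g v i _ (by omega), ?_⟩
    intro hmem
    simp only [Finset.coe_singleton, Set.mem_singleton_iff] at hmem
    have : i = 0 := congrArg Fin.val hmem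
    omega
  · have hN : ∀ i ∈ (Finset.Icc (g+2) (2*g+4)).erase v.val, i < 2*g+5 := by
      intro i hi
      have := (Finset.mem_Icc.mp (Finset.mem_of_mem_erase hi)).2
      omega
    have hcard : ((Finset.Icc (g+2) (2*g+4)).erase v.val).card = g + 2 := by
      rw [Finset.card_erase_of_mem (Finset.mem_Icc.mpr ⟨by omega, by omega⟩), Nat.card_Icc]
      omega
    have := le_ncard_attach _ hN ((exG g).neighborSet v \
      (↑({⟨0, by omega⟩} : Finset (Fin (2*g+5))) : Set (Fin (2*g+5)))) ?_
    · omega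
    · intro i hi
      obtain ⟨hne, hicc⟩ := Finset.mem_erase.mp hi
      obtain ⟨hi1, hi2⟩ := Finset.mem_Icc.mp hicc
      refine ⟨Gadj_to g v i _ (by omega), ?_⟩
      intro hmem
      simp only [Finset.coe_singleton, Set.mem_singleton_iff] at hmem
      have : i = 0 := congrArg Fin.val hmem
      omega

lemma cutH (g : ℕ) (hg : 1 ≤ g) :
    IsGNCut (exH g) g ({⟨g+2, by omega⟩, ⟨g+3, by omega⟩} : Finset (Fin (2*g+5))) := by
  refine ⟨H_not_pre g hg, ?_⟩
  intro v hv
  have hv1 : v.val ≠ g+2 ∧ v.val ≠ g+3 := by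
    constructor
    · intro h
      exact hv (Finset.mem_insert.mpr (Or.inl (Fin.ext h)))
    · intro h
      exact hv (Finset.mem_insert.mpr (Or.inr (Finset.mem_singleton.mpr (Fin.ext h))))
  have hvlt := v.isLt
  have hnotF : ∀ (i : ℕ), i ≠ g+2 → i ≠ g+3 → ∀ (hi : i < 2*g+5),
      (⟨i, hi⟩ : Fin (2*g+5)) ∉
        (↑({⟨g+2, by omega⟩, ⟨g+3, by omega⟩} : Finset (Fin (2*g+5))) : Set (Fin (2*g+5))) := by
    intro i h2 h3 hi hmem
    simp only [Finset.coe_insert, Set.mem_insert_iff, Finset.coe_singleton,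
      Set.mem_singleton_iff] at hmem
    rcases hmem with h | h
    · exact h2 (congrArg Fin.val h)
    · exact h3 (congrArg Fin.val h)
  by_cases hA : v.val ≤ g+1
  · by_cases hlt : v.val < g
    · have hgm : g ∉ (Finset.range g).erase v.val := by
        simp only [Finset.mem_erase, Finset.mem_range]
        omega
      have hN : ∀ i ∈ ((Finset.range g).erase v.val) ∪ {g}, i < 2*g+5 := by
        intro i hi
        rcases Finset.mem_union.mp hi with h | h
        · have := Finset.mem_range.mp (Finset.mem_of_mem_erase h); omega
        · have := Finset.mem_singleton.mp h; omega
      have hcard : (((Finset.range g).erase v.val) ∪ {g}).card = g := by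
        rw [Finset.card_union_of_disjoint (Finset.disjoint_singleton_right.mpr hgm),
          Finset.card_erase_of_mem (Finset.mem_range.mpr hlt), Finset.card_range,
          Finset.card_singleton]
        omega
      refine le_trans ?_ (le_ncard_attach _ hN _ ?_)
      · omega
      intro i hi
      have hif : (i < g ∧ i ≠ v.val) ∨ i = g := by
        rcases Finset.mem_union.mp hi with h | h
        · obtain ⟨h1, h2⟩ := Finset.mem_erase.mp h
          exact Or.inl ⟨Finset.mem_range.mp h2, h1⟩
        · exact Or.inr (Finset.mem_singleton.mp h)
      refine ⟨Hadj_to g v i _ (by omega), hnotF i (by omega) (by omega) _⟩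
    · have hN : ∀ i ∈ Finset.range g, i < 2*g+5 := by
        intro i hi
        have := Finset.mem_range.mp hi
        omega
      have hcard : (Finset.range g).card = g := Finset.card_range g
      refine le_trans ?_ (le_ncard_attach _ hN _ ?_)
      · omega
      intro i hi
      have hilt := Finset.mem_range.mp hi
      refine ⟨Hadj_to g v i _ (by omega), hnotF i (by omega) (by omega) _⟩
  · have hvB : g + 4 ≤ v.val := by omega
    have hN : ∀ i ∈ (Finset.Icc (g+4) (2*g+4)).erase v.val, i < 2*g+5 := by
      intro i hi
      have := (Finset.mem_Icc.mp (Finset.mem_of_mem_erase hi)).2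
      omega
    have hcard : ((Finset.Icc (g+4) (2*g+4)).erase v.val).card = g := by
      rw [Finset.card_erase_of_mem (Finset.mem_Icc.mpr ⟨by omega, by omega⟩), Nat.card_Icc]
      omega
    refine le_trans ?_ (le_ncard_attach _ hN _ ?_)
    · omega
    intro i hi
    obtain ⟨hne, hicc⟩ := Finset.mem_erase.mp hi
    obtain ⟨hi1, hi2⟩ := Finset.mem_Icc.mp hicc
    refine ⟨Hadj_to g v i _ (by omega), hnotF i (by omega) (by omega) _⟩

lemma gnG_le (g : ℕ) (hg : 1 ≤ g) : gnConn (exG g) g ≤ 1 :=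
  Nat.sInf_le ⟨({⟨0, by omega⟩} : Finset (Fin (2*g+5))), cutG g hg, Finset.card_singleton _⟩

lemma pairne (g : ℕ) : (⟨g+2, by omega⟩ : Fin (2*g+5)) ≠ (⟨g+3, by omega⟩ : Fin (2*g+5)) := by
  intro h
  have : g + 2 = g + 3 := congrArg Fin.val h
  omega

lemma paircard (g : ℕ) :
    ({⟨g+2, by omega⟩, ⟨g+3, by omega⟩} : Finset (Fin (2*g+5))).card = 2 :=
  Finset.card_pair (pairne g)

lemma gnH_ge (g : ℕ) (hg : 1 ≤ g) : 2 ≤ gnConn (exH g) g := by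
  have hcut := cutH g hg
  have hpc := paircard g
  have hne : {m | ∃ F : Finset (Fin (2*g+5)), IsGNCut (exH g) g F ∧ F.card = m}.Nonempty := by
    refine ⟨2, ?_⟩
    exact ⟨_, hcut, hpc⟩
  have hmem := Nat.sInf_mem hne
  obtain ⟨F, hF, hcard⟩ := hmem
  by_contra hlt
  push_neg at hlt
  have hlt' : F.card < 2 := by
    rw [hcard]
    exact hlt
  have hFc : F.card ≤ 1 := by omega
  rcases Nat.le_one_iff_eq_zero_or_eq_one.mp hFc with h0 | h1
  · obtain rfl := Finset.card_eq_zero.mp h0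
    exact hF.1 (Hpre_induce g hg _ (by simp) (Or.inl (by simp)))
  · obtain ⟨v, rfl⟩ := Finset.card_eq_one.mp h1
    by_cases hv0 : v.val = 0
    · have hw : (⟨g+1, by omega⟩ : Fin (2*g+5)) ∉ ({v} : Finset (Fin (2*g+5))) := by
        simp only [Finset.mem_singleton]
        intro h
        have : g + 1 = v.val := congrArg Fin.val h
        omega
      have hdeg := hF.2 ⟨g+1, by omega⟩ hw
      have hub : ((exH g).neighborSet ⟨g+1, by omega⟩ \
          (↑({v} : Finset (Fin (2*g+5))) : Set (Fin (2*g+5)))).ncard ≤ g - 1 + 1 - 1 := by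
        refine ncard_le_bound _ 1 (g-1) (by omega) ?_
        intro u hu
        obtain ⟨hadj, hnu⟩ := hu
        have h1 := Hadj_from g (g+1) (by omega) u hadj
        have hu0 : u.val ≠ 0 := by
          intro h
          apply hnu
          simp only [Finset.coe_singleton, Set.mem_singleton_iff]
          exact Fin.ext (by omega)
        omega
      omega
    · apply hF.1
      apply Hpre_induce g hg
      · simp only [Finset.coe_singleton, Set.mem_compl_iff, Set.mem_singleton_iff]
        intro h
        exact hv0 (congrArg Fin.val h).symm
      · by_cases h2 : v.val = g+2
        · refine Or.inr ?_
          simp only [Finset.coe_singleton, Set.mem_compl_iff, Set.mem_singleton_iff]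
          intro h
          have : g + 3 = v.val := congrArg Fin.val h
          omega
        · refine Or.inl ?_
          simp only [Finset.coe_singleton, Set.mem_compl_iff, Set.mem_singleton_iff]
          intro h
          exact h2 (congrArg Fin.val h).symm

/-- Monotonicity under spanning subgraphs fails for κ^g when g ≥ 1, while for
g = 0 it holds for connected non-complete spanning subgraphs. -/
theorem stmt19 :
    (∀ g : ℕ, 1 ≤ g → ∃ (m : ℕ) (G H : SimpleGraph (Fin m)),
      H ≤ G ∧ G.Connected ∧ H.Connected ∧
      (∃ F : Finset (Fin m), IsGNCut G g F) ∧
      (∃ F : Finset (Fin m), IsGNCut H g F) ∧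
      gnConn G g < gnConn H g) ∧
    (∀ (m : ℕ) (G H : SimpleGraph (Fin m)), H ≤ G → G.Connected → H.Connected →
      G ≠ ⊤ → H ≠ ⊤ → gnConn H 0 ≤ gnConn G 0) := by
  constructor
  · intro g hg
    refine ⟨2*g+5, exG g, exH g, HleG g, (Hconn g hg).mono (HleG g), Hconn g hg,
      ⟨_, cutG g hg⟩, ⟨_, cutH g hg⟩, ?_⟩
    have h1 := gnG_le g hg
    have h2 := gnH_ge g hg
    omega
  · intro m G H hle hGc hHc hGt hHt
    have hnadj : ∃ u v : Fin m, u ≠ v ∧ ¬ G.Adj u v := by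
      by_contra h
      push_neg at h
      apply hGt
      ext u v
      simp only [SimpleGraph.top_adj]
      exact ⟨fun hadj => hadj.ne, h u v⟩
    obtain ⟨u, v, huv, hnadj⟩ := hnadj
    have hne : {k | ∃ F : Finset (Fin m), IsGNCut G 0 F ∧ F.card = k}.Nonempty := by
      refine ⟨(Finset.univ \ {u, v}).card, Finset.univ \ {u, v}, ⟨?_, fun _ _ => Nat.zero_le _⟩, rfl⟩
      intro hpre
      set s : Set (Fin m) := (↑(Finset.univ \ ({u, v} : Finset (Fin m))) : Set (Fin m))ᶜ with hs
      have hu : u ∈ s := by simp [hs]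
      have hv : v ∈ s := by simp [hs]
      have hmem : ∀ x : Fin m, x ∈ s → x = u ∨ x = v := by
        intro x hx
        simp only [hs, Set.mem_compl_iff, Finset.coe_sdiff, Finset.coe_univ, Set.mem_diff,
          Set.mem_univ, true_and, not_not, Finset.coe_insert, Set.mem_insert_iff,
          Finset.coe_singleton, Set.mem_singleton_iff] at hx
        exact hx
      have hinv := reach_invar (G.induce s) (fun x => (x : Fin m) = u)
        ?_ (hpre ⟨u, hu⟩ ⟨v, hv⟩) rfl
      · exact huv hinv.symm
      · intro a b hab ha
        have hab' : G.Adj ↑a ↑b := hab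
        rcases hmem _ b.2 with h | h
        · exact h
        · exfalso
          rw [ha, h] at hab'
          exact hnadj hab'
    have h1 := Nat.sInf_mem hne
    obtain ⟨F, hF, hcard⟩ := h1
    apply Nat.sInf_le
    refine ⟨F, ⟨?_, fun _ _ => Nat.zero_le _⟩, hcard⟩
    intro hpre
    apply hF.1
    intro a b
    exact (hpre a b).mono (fun x y h => hle h)
end
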